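/- Let X be an isotropic rotationally invariant random vector in ℝⁿ whose radial distribution has finite moments of all orders. Then for every ξ ∈ ℝⁿ, Λ_X(ξ) ≥ Λ_{√n θ}(ξ) and consequently Λ*_X(x) ≤ Λ*_{√n θ}(x) for all x, where θ is uniform on the unit sphere S^{n−1}. -/

import Mathlib

open MeasureTheory Real Set
/-- The cumulant generating function of a measure on `ℝⁿ`, with value `⊤` when the
exponential moment is infinite. -/
noncomputable def logLaplace {n : ℕ} (μ : Measure (EuclideanSpace ℝ (Fin n)))
    (ξ : EuclideanSpace ℝ (Fin n)) : EReal :=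
  open scoped Classical in
  if Integrable (fun y => Real.exp (inner ℝ y ξ : ℝ)) μ then
    ((Real.log (∫ y, Real.exp ((inner ℝ y ξ : ℝ)) ∂μ) : ℝ) : EReal)
  else ⊤

/-- The Cramér transform `Λ*_μ(x) = sup_ξ (⟨x,ξ⟩ − Λ_μ(ξ))`, with values in `EReal`. -/
noncomputable def cramerE {n : ℕ} (μ : Measure (EuclideanSpace ℝ (Fin n)))
    (x : EuclideanSpace ℝ (Fin n)) : EReal :=
  ⨆ ξ : EuclideanSpace ℝ (Fin n), (((inner ℝ x ξ : ℝ) : EReal) - logLaplace μ ξ)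

open scoped ENNReal

namespace SphereAux

/-- coefficients of the cosh series (zero for odd indices). -/
noncomputable def a (k : ℕ) (x : ℝ) : ℝ := (x ^ k + (-x) ^ k) / (2 * k.factorial)

lemma a_nonneg (k : ℕ) (x : ℝ) : 0 ≤ a k x := by
  rcases Nat.even_or_odd k with hk | hk
  · have : (-x) ^ k = x ^ k := hk.neg_pow x
    rw [a, this]
    have : (0:ℝ) ≤ x ^ k := hk.pow_nonneg x
    positivity
  · have : (-x) ^ k = -(x ^ k) := hk.neg_pow x
    rw [a, this]
    simp

lemma a_odd (k : ℕ) (hk : Odd k) (x : ℝ) : a k x = 0 := by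
  rw [a, hk.neg_pow x]; ring

lemma a_mul (k : ℕ) (c : ℝ) (x : ℝ) : a k (c * x) = c ^ k * a k x := by
  have h : (-(c * x)) ^ k = c ^ k * (-x) ^ k := by
    rw [show -(c * x) = c * (-x) by ring, mul_pow]
  rw [a, a, mul_pow, h]
  ring

lemma a_continuous (k : ℕ) : Continuous (a k) := by
  unfold a
  exact ((continuous_pow k).add (continuous_neg.pow k)).div_const _

lemma hasSum_a (x : ℝ) : HasSum (fun k => a k x) (Real.cosh x) := by
  have h1 : HasSum (fun k : ℕ => x ^ k / k.factorial) (Real.exp x) := by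
    rw [Real.exp_eq_exp_ℝ]; exact NormedSpace.expSeries_div_hasSum_exp x
  have h2 : HasSum (fun k : ℕ => (-x) ^ k / k.factorial) (Real.exp (-x)) := by
    rw [Real.exp_eq_exp_ℝ]; exact NormedSpace.expSeries_div_hasSum_exp (-x)
  have h3 := (h1.add h2).div_const 2
  rw [Real.cosh_eq]
  have : (fun k => a k x) = fun i => (x ^ i / ↑i.factorial + (-x) ^ i / ↑i.factorial) / 2 := by
    funext k
    rw [a]; ring
  rw [this]; exact h3

lemma ofReal_cosh (x : ℝ) :
    ENNReal.ofReal (Real.cosh x) = ∑' k, ENNReal.ofReal (a k x) := by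
  rw [← (hasSum_a x).tsum_eq]
  exact ENNReal.ofReal_tsum_of_nonneg (fun k => a_nonneg k x) (hasSum_a x).summable

lemma exists_rot {F : Type*} [NormedAddCommGroup F] [InnerProductSpace ℝ F]
    [FiniteDimensional ℝ F] (u v : F) (h : ‖u‖ = ‖v‖) : ∃ O : F ≃ₗᵢ[ℝ] F, O u = v := by
  by_cases huv : u = v
  · exact ⟨LinearIsometryEquiv.refl ℝ F, huv⟩
  · exact ⟨Submodule.reflection (ℝ ∙ (u - v))ᗮ, Submodule.reflection_sub h⟩

lemma lint_inv {F : Type*} [NormedAddCommGroup F] [InnerProductSpace ℝ F]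
    [MeasurableSpace F] [BorelSpace F]
    (ν : Measure F) (O : F ≃ₗᵢ[ℝ] F) (hO : ν.map O = ν) {f : F → ℝ≥0∞}
    (hf : Measurable f) : ∫⁻ y, f (O y) ∂ν = ∫⁻ y, f y ∂ν := by
  conv_rhs => rw [← hO]
  exact (lintegral_map hf O.continuous.measurable).symm

/-- Symmetrization: for a symmetric measure, the exponential lintegral equals the cosh one. -/
lemma lint_exp_eq_lint_cosh {F : Type*} [NormedAddCommGroup F] [InnerProductSpace ℝ F]
    [MeasurableSpace F] [BorelSpace F] (ν : Measure F)
    (hν : ν.map (LinearIsometryEquiv.neg ℝ (E := F)) = ν) (z : F) (c : ℝ) :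
    ∫⁻ y, ENNReal.ofReal (Real.exp (c * (inner ℝ y z : ℝ))) ∂ν
      = ∫⁻ y, ENNReal.ofReal (Real.cosh (c * (inner ℝ y z : ℝ))) ∂ν := by
  have hcont : Continuous fun y : F => (inner ℝ y z : ℝ) := continuous_id.inner continuous_const
  have hmeas : Measurable fun y : F => ENNReal.ofReal (Real.exp (c * (inner ℝ y z : ℝ))) :=
    (ENNReal.continuous_ofReal.comp (Real.continuous_exp.comp (hcont.const_smul c))).measurable
  have hneg : ∫⁻ y, ENNReal.ofReal (Real.exp (c * (inner ℝ y z : ℝ))) ∂ν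
      = ∫⁻ y, ENNReal.ofReal (Real.exp (-(c * (inner ℝ y z : ℝ)))) ∂ν := by
    have := lint_inv ν (LinearIsometryEquiv.neg ℝ (E := F)) hν hmeas
    rw [← this]
    refine lintegral_congr fun y => ?_
    have : (inner ℝ ((LinearIsometryEquiv.neg ℝ (E := F)) y) z : ℝ) = -(inner ℝ y z : ℝ) := by
      simp [inner_neg_left]
    rw [this]
    ring_nf
  have key : (2 : ℝ≥0∞) * ∫⁻ y, ENNReal.ofReal (Real.exp (c * (inner ℝ y z : ℝ))) ∂ν
      = (2 : ℝ≥0∞) * ∫⁻ y, ENNReal.ofReal (Real.cosh (c * (inner ℝ y z : ℝ))) ∂ν := by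
    have hmeas2 : Measurable fun y : F => ENNReal.ofReal (Real.exp (-(c * (inner ℝ y z : ℝ)))) :=
      (ENNReal.continuous_ofReal.comp
        (Real.continuous_exp.comp ((hcont.const_smul c).neg))).measurable
    calc (2 : ℝ≥0∞) * ∫⁻ y, ENNReal.ofReal (Real.exp (c * (inner ℝ y z : ℝ))) ∂ν
        = (∫⁻ y, ENNReal.ofReal (Real.exp (c * (inner ℝ y z : ℝ))) ∂ν)
          + ∫⁻ y, ENNReal.ofReal (Real.exp (-(c * (inner ℝ y z : ℝ)))) ∂ν := by
          rw [← hneg, two_mul]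
      _ = ∫⁻ y, (ENNReal.ofReal (Real.exp (c * (inner ℝ y z : ℝ)))
          + ENNReal.ofReal (Real.exp (-(c * (inner ℝ y z : ℝ))))) ∂ν := by
          rw [lintegral_add_left hmeas]
      _ = ∫⁻ y, (2 : ℝ≥0∞) * ENNReal.ofReal (Real.cosh (c * (inner ℝ y z : ℝ))) ∂ν := by
          refine lintegral_congr fun y => ?_
          rw [← ENNReal.ofReal_add (Real.exp_pos _).le (Real.exp_pos _).le]
          rw [show (2 : ℝ≥0∞) = ENNReal.ofReal (2 : ℝ) by simp]
          rw [← ENNReal.ofReal_mul (by norm_num)]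
          congr 1
          rw [Real.cosh_eq]
          ring
      _ = (2 : ℝ≥0∞) * ∫⁻ y, ENNReal.ofReal (Real.cosh (c * (inner ℝ y z : ℝ))) ∂ν := by
          have hm : Measurable fun y : F => ENNReal.ofReal (Real.cosh (c * (inner ℝ y z : ℝ))) :=
            (ENNReal.continuous_ofReal.comp
              (Real.continuous_cosh.comp (hcont.const_smul c))).measurable
          exact lintegral_const_mul 2 hm
  exact (ENNReal.mul_right_inj (by norm_num) (by norm_num)).mp key

/-- Jensen's inequality for moments. -/
lemma moment_bound {F : Type*} [NormedAddCommGroup F] [InnerProductSpace ℝ F]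
    [MeasurableSpace F] [BorelSpace F] (ν : Measure F) [IsProbabilityMeasure ν]
    {N : ℝ} (h2 : ∫ y, ‖y‖ ^ 2 ∂ν = N)
    (hmom : ∀ k : ℕ, Integrable (fun y => ‖y‖ ^ k) ν) (m : ℕ) :
    N ^ m ≤ ∫ y, ‖y‖ ^ (2 * m) ∂ν := by
  have hgi : Integrable ((fun t : ℝ => t ^ m) ∘ fun y : F => ‖y‖ ^ 2) ν := by
    have := hmom (2 * m)
    refine this.congr (ae_of_all _ fun y => ?_)
    simp [Function.comp, pow_mul]
  have hJ := (convexOn_pow (𝕜 := ℝ) m).map_average_le ((continuous_pow m).continuousOn)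
    isClosed_Ici (ae_of_all _ fun y : F => sq_nonneg ‖y‖) (hmom 2) hgi
  rw [average_eq_integral, average_eq_integral, h2] at hJ
  refine hJ.trans_eq ?_
  refine integral_congr_ae (ae_of_all _ fun y => ?_)
  simp [pow_mul]


lemma key_lintegral {n : ℕ}
    (μ : Measure (EuclideanSpace ℝ (Fin n))) [IsProbabilityMeasure μ]
    (σ : Measure (EuclideanSpace ℝ (Fin n))) [IsProbabilityMeasure σ]
    (hrot : ∀ O : EuclideanSpace ℝ (Fin n) ≃ₗᵢ[ℝ] EuclideanSpace ℝ (Fin n), μ.map O = μ)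
    (hσrot : ∀ O : EuclideanSpace ℝ (Fin n) ≃ₗᵢ[ℝ] EuclideanSpace ℝ (Fin n), σ.map O = σ)
    (h2 : ∫ y, ‖y‖ ^ 2 ∂μ = (n : ℝ))
    (hmom : ∀ k : ℕ, Integrable (fun y => ‖y‖ ^ k) μ)
    (hae : ∀ᵐ θ ∂σ, ‖θ‖ = 1)
    (ξ : EuclideanSpace ℝ (Fin n)) :
    ∫⁻ θ, ENNReal.ofReal (Real.exp (Real.sqrt n * (inner ℝ θ ξ : ℝ))) ∂σ
      ≤ ∫⁻ y, ENNReal.ofReal (Real.exp ((inner ℝ y ξ : ℝ))) ∂μ := by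
  by_cases hξ : ξ = 0
  · subst hξ
    simp [inner_zero_right]
  set c : ℝ := ‖ξ‖ with hcdef
  have hc : 0 < c := norm_pos_iff.mpr hξ
  set u : EuclideanSpace ℝ (Fin n) := c⁻¹ • ξ with hudef
  have hu : ‖u‖ = 1 := by
    rw [hudef, norm_smul, norm_inv, Real.norm_eq_abs, abs_of_pos hc, ← hcdef,
      inv_mul_cancel₀ hc.ne']
  have hξu : ξ = c • u := by rw [hudef, smul_smul, mul_inv_cancel₀ hc.ne', one_smul]
  have hcontu : Continuous fun θ : EuclideanSpace ℝ (Fin n) => (inner ℝ u θ : ℝ) :=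
    continuous_const.inner continuous_id
  have hma : ∀ k, Measurable fun θ : EuclideanSpace ℝ (Fin n) =>
      ENNReal.ofReal (a k (inner ℝ u θ : ℝ)) :=
    fun k => (ENNReal.continuous_ofReal.comp ((a_continuous k).comp hcontu)).measurable
  set sk : ℕ → ℝ≥0∞ :=
    fun k => ∫⁻ θ, ENNReal.ofReal (a k (inner ℝ u θ : ℝ)) ∂σ with hskdef
  set Ik : ℕ → ℝ≥0∞ := fun k => ∫⁻ y, ENNReal.ofReal (‖y‖ ^ k) ∂μ with hIkdef
  have hH : ∀ r : ℝ, 0 ≤ r →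
      ∫⁻ θ, ENNReal.ofReal (Real.cosh (r * (inner ℝ u θ : ℝ))) ∂σ
        = ∑' k, ENNReal.ofReal (r ^ k) * sk k := by
    intro r hr
    have hpt : ∀ θ : EuclideanSpace ℝ (Fin n),
        ENNReal.ofReal (Real.cosh (r * (inner ℝ u θ : ℝ)))
          = ∑' k, ENNReal.ofReal (r ^ k) * ENNReal.ofReal (a k (inner ℝ u θ : ℝ)) := by
      intro θ
      rw [ofReal_cosh]
      congr 1; funext k
      rw [a_mul, ENNReal.ofReal_mul (pow_nonneg hr k)]
    rw [lintegral_congr hpt, lintegral_tsum fun k => ((hma k).const_mul _).aemeasurable]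
    congr 1; funext k
    exact lintegral_const_mul _ (hma k)
  have hA : ∀ θ : EuclideanSpace ℝ (Fin n), ‖θ‖ = 1 →
      ∫⁻ y, ENNReal.ofReal (Real.cosh (c * (inner ℝ y θ : ℝ))) ∂μ
        = ∫⁻ y, ENNReal.ofReal (Real.cosh ((inner ℝ y ξ : ℝ))) ∂μ := by
    intro θ hθ
    obtain ⟨O, hO⟩ := exists_rot ξ (c • θ)
      (by rw [norm_smul, hθ, Real.norm_eq_abs, abs_of_pos hc, mul_one])
    have hmf : Measurable fun y : EuclideanSpace ℝ (Fin n) =>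
        ENNReal.ofReal (Real.cosh ((inner ℝ y (c • θ) : ℝ))) :=
      (ENNReal.continuous_ofReal.comp
        (Real.continuous_cosh.comp (continuous_id.inner continuous_const))).measurable
    have hinv := lint_inv μ O (hrot O) hmf
    calc ∫⁻ y, ENNReal.ofReal (Real.cosh (c * (inner ℝ y θ : ℝ))) ∂μ
        = ∫⁻ y, ENNReal.ofReal (Real.cosh ((inner ℝ y (c • θ) : ℝ))) ∂μ := by
          refine lintegral_congr fun y => ?_
          rw [real_inner_smul_right]
      _ = ∫⁻ y, ENNReal.ofReal (Real.cosh ((inner ℝ (O y) (c • θ) : ℝ))) ∂μ := hinv.symm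
      _ = ∫⁻ y, ENNReal.ofReal (Real.cosh ((inner ℝ y ξ : ℝ))) ∂μ := by
          refine lintegral_congr fun y => ?_
          rw [← hO, O.inner_map_map]
  have hL : ∀ y : EuclideanSpace ℝ (Fin n),
      ∫⁻ θ, ENNReal.ofReal (Real.cosh (c * (inner ℝ y θ : ℝ))) ∂σ
        = ∑' k, ENNReal.ofReal ((c * ‖y‖) ^ k) * sk k := by
    intro y
    rw [← hH (c * ‖y‖) (by positivity)]
    by_cases hy : y = 0
    · subst hy
      simp [inner_zero_left]
    obtain ⟨O, hO⟩ := exists_rot (‖y‖ • u) y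
      (by rw [norm_smul, hu, Real.norm_eq_abs, abs_of_nonneg (norm_nonneg y), mul_one])
    have hmf : Measurable fun θ : EuclideanSpace ℝ (Fin n) =>
        ENNReal.ofReal (Real.cosh (c * (inner ℝ y θ : ℝ))) :=
      (ENNReal.continuous_ofReal.comp
        (Real.continuous_cosh.comp
          (continuous_const.mul (continuous_const.inner continuous_id)))).measurable
    rw [← lint_inv σ O (hσrot O) hmf]
    refine lintegral_congr fun θ => ?_
    congr 2
    calc c * (inner ℝ y (O θ) : ℝ) = c * (inner ℝ (O (‖y‖ • u)) (O θ) : ℝ) := by rw [hO]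
      _ = c * (inner ℝ ((‖y‖ : ℝ) • u) θ : ℝ) := by rw [O.inner_map_map]
      _ = c * (‖y‖ * (inner ℝ u θ : ℝ)) := by rw [real_inner_smul_left]
      _ = (c * ‖y‖) * (inner ℝ u θ : ℝ) := by ring
  have hswap : ∫⁻ θ, (∫⁻ y, ENNReal.ofReal (Real.cosh (c * (inner ℝ y θ : ℝ))) ∂μ) ∂σ
      = ∫⁻ y, (∫⁻ θ, ENNReal.ofReal (Real.cosh (c * (inner ℝ y θ : ℝ))) ∂σ) ∂μ := by
    apply lintegral_lintegral_swap
    apply Measurable.aemeasurable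
    apply (ENNReal.continuous_ofReal.comp (Real.continuous_cosh.comp
      (continuous_const.mul (continuous_snd.inner continuous_fst)))).measurable
  have hmnormk : ∀ k, Measurable fun y : EuclideanSpace ℝ (Fin n) =>
      ENNReal.ofReal (‖y‖ ^ k) :=
    fun k => (ENNReal.continuous_ofReal.comp (continuous_norm.pow k)).measurable
  have hAeq : ∫⁻ y, ENNReal.ofReal (Real.cosh ((inner ℝ y ξ : ℝ))) ∂μ
      = ∑' k, (ENNReal.ofReal (c ^ k) * sk k) * Ik k := by
    have e1 : ∫⁻ y, ENNReal.ofReal (Real.cosh ((inner ℝ y ξ : ℝ))) ∂μ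
        = ∫⁻ θ, (∫⁻ y, ENNReal.ofReal (Real.cosh (c * (inner ℝ y θ : ℝ))) ∂μ) ∂σ := by
      have hc1 : ∀ᵐ θ ∂σ, (∫⁻ y, ENNReal.ofReal (Real.cosh (c * (inner ℝ y θ : ℝ))) ∂μ)
          = ∫⁻ y, ENNReal.ofReal (Real.cosh ((inner ℝ y ξ : ℝ))) ∂μ :=
        hae.mono fun θ hθ => hA θ hθ
      rw [lintegral_congr_ae hc1, lintegral_const, measure_univ, mul_one]
    rw [e1, hswap]
    have e3 : ∀ y : EuclideanSpace ℝ (Fin n),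
        (∫⁻ θ, ENNReal.ofReal (Real.cosh (c * (inner ℝ y θ : ℝ))) ∂σ)
          = ∑' k, (ENNReal.ofReal (c ^ k) * sk k) * ENNReal.ofReal (‖y‖ ^ k) := by
      intro y
      rw [hL y]
      congr 1; funext k
      rw [mul_pow, ENNReal.ofReal_mul (pow_nonneg hc.le k)]
      ring
    rw [lintegral_congr e3,
      lintegral_tsum fun k => ((hmnormk k).const_mul _).aemeasurable]
    congr 1; funext k
    exact lintegral_const_mul _ (hmnormk k)
  have hBeq : ∫⁻ θ, ENNReal.ofReal (Real.cosh (Real.sqrt n * (inner ℝ θ ξ : ℝ))) ∂σ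
      = ∑' k, ENNReal.ofReal ((Real.sqrt n * c) ^ k) * sk k := by
    rw [← hH (Real.sqrt n * c) (by positivity)]
    refine lintegral_congr fun θ => ?_
    congr 2
    calc Real.sqrt n * (inner ℝ θ ξ : ℝ) = Real.sqrt n * (inner ℝ θ (c • u) : ℝ) := by
          rw [← hξu]
      _ = Real.sqrt n * (c * (inner ℝ θ u : ℝ)) := by rw [real_inner_smul_right]
      _ = (Real.sqrt n * c) * (inner ℝ u θ : ℝ) := by rw [real_inner_comm θ u]; ring
  have hterm : ∀ k, ENNReal.ofReal ((Real.sqrt n * c) ^ k) * sk k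
      ≤ (ENNReal.ofReal (c ^ k) * sk k) * Ik k := by
    intro k
    rcases Nat.even_or_odd k with hk | hk
    · obtain ⟨m, hm⟩ := hk
      have hbound : ENNReal.ofReal (Real.sqrt n ^ k) ≤ Ik k := by
        have hIk : Ik k = ENNReal.ofReal (∫ y, ‖y‖ ^ k ∂μ) :=
          (ofReal_integral_eq_lintegral_ofReal (hmom k)
            (ae_of_all _ fun y => by positivity)).symm
        rw [hIk]
        apply ENNReal.ofReal_le_ofReal
        have hkm : k = 2 * m := by omega
        rw [hkm, pow_mul, Real.sq_sqrt (Nat.cast_nonneg n)]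
        exact moment_bound μ h2 hmom m
      calc ENNReal.ofReal ((Real.sqrt n * c) ^ k) * sk k
          = (ENNReal.ofReal (c ^ k) * sk k) * ENNReal.ofReal (Real.sqrt n ^ k) := by
            rw [mul_pow, ENNReal.ofReal_mul (pow_nonneg (Real.sqrt_nonneg n) k)]
            ring
        _ ≤ (ENNReal.ofReal (c ^ k) * sk k) * Ik k := mul_le_mul_right hbound _
    · have hsk : sk k = 0 := by
        simp only [hskdef]
        simp [a_odd k hk]
      rw [hsk]
      simp
  calc ∫⁻ θ, ENNReal.ofReal (Real.exp (Real.sqrt n * (inner ℝ θ ξ : ℝ))) ∂σ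
      = ∫⁻ θ, ENNReal.ofReal (Real.cosh (Real.sqrt n * (inner ℝ θ ξ : ℝ))) ∂σ :=
        lint_exp_eq_lint_cosh σ (hσrot _) ξ (Real.sqrt n)
    _ = ∑' k, ENNReal.ofReal ((Real.sqrt n * c) ^ k) * sk k := hBeq
    _ ≤ ∑' k, (ENNReal.ofReal (c ^ k) * sk k) * Ik k := ENNReal.tsum_le_tsum hterm
    _ = ∫⁻ y, ENNReal.ofReal (Real.cosh ((inner ℝ y ξ : ℝ))) ∂μ := hAeq.symm
    _ = ∫⁻ y, ENNReal.ofReal (Real.exp ((inner ℝ y ξ : ℝ))) ∂μ := by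
        have h := (lint_exp_eq_lint_cosh μ (hrot _) ξ 1).symm
        simpa using h

end SphereAux

open SphereAux

/-- Let `X ∼ μ` be an isotropic rotationally invariant random vector in `ℝⁿ` whose radial
distribution has all moments finite, and let `σ` be the uniform probability measure on the
unit sphere `S^{n−1}` (the unique rotation-invariant probability measure on the sphere).
Then `Λ_X(ξ) ≥ Λ_{√n θ}(ξ)` for all `ξ`, and consequently `Λ*_X(x) ≤ Λ*_{√n θ}(x)` for
all `x`, where `θ ∼ σ`. -/
theorem logLaplace_ge_sphere_of_isotropic {n : ℕ} (hn : 0 < n)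
    (μ : Measure (EuclideanSpace ℝ (Fin n))) [IsProbabilityMeasure μ]
    (hrot : ∀ O : EuclideanSpace ℝ (Fin n) ≃ₗᵢ[ℝ] EuclideanSpace ℝ (Fin n), μ.map O = μ)
    (hiso : ∀ u : EuclideanSpace ℝ (Fin n), ‖u‖ = 1 →
      (∫ y, (inner ℝ y u : ℝ) ∂μ) = 0 ∧ (∫ y, (inner ℝ y u : ℝ) ^ 2 ∂μ) = 1)
    (hmom : ∀ k : ℕ, Integrable (fun y => ‖y‖ ^ k) μ)
    (σ : Measure (EuclideanSpace ℝ (Fin n))) [IsProbabilityMeasure σ]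
    (hσrot : ∀ O : EuclideanSpace ℝ (Fin n) ≃ₗᵢ[ℝ] EuclideanSpace ℝ (Fin n), σ.map O = σ)
    (hσsph : σ (Metric.sphere (0 : EuclideanSpace ℝ (Fin n)) 1) = 1) :
    (∀ ξ : EuclideanSpace ℝ (Fin n),
        logLaplace (σ.map fun y => (Real.sqrt n) • y) ξ ≤ logLaplace μ ξ) ∧
      ∀ x : EuclideanSpace ℝ (Fin n),
        cramerE μ x ≤ cramerE (σ.map fun y => (Real.sqrt n) • y) x := by
  classical
  have h2 : ∫ y, ‖y‖ ^ 2 ∂μ = (n : ℝ) := by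
    have hsing : ∀ i : Fin n, ‖EuclideanSpace.single i (1:ℝ)‖ = 1 := by
      intro i; rw [EuclideanSpace.norm_single]; norm_num
    have hinner : ∀ (i : Fin n) (y : EuclideanSpace ℝ (Fin n)),
        (inner ℝ y (EuclideanSpace.single i (1:ℝ)) : ℝ) = y i := by
      intro i y; rw [EuclideanSpace.inner_single_right]; simp
    have hnorm : ∀ y : EuclideanSpace ℝ (Fin n),
        ‖y‖ ^ 2 = ∑ i, (inner ℝ y (EuclideanSpace.single i (1:ℝ)) : ℝ) ^ 2 := by
      intro y
      simp_rw [hinner]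
      rw [EuclideanSpace.norm_eq, Real.sq_sqrt (by positivity)]
      congr 1; funext i; rw [Real.norm_eq_abs, sq_abs]
    have hint : ∀ i : Fin n, Integrable
        (fun y : EuclideanSpace ℝ (Fin n) =>
          (inner ℝ y (EuclideanSpace.single i (1:ℝ)) : ℝ) ^ 2) μ := by
      intro i
      refine (hmom 2).mono' ?_ (ae_of_all _ fun y => ?_)
      · exact ((continuous_id.inner continuous_const).pow 2).aestronglyMeasurable
      · rw [Real.norm_eq_abs, abs_pow]
        have h1 : |(inner ℝ y (EuclideanSpace.single i (1:ℝ)) : ℝ)| ≤ ‖y‖ := by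
          have := abs_real_inner_le_norm y (EuclideanSpace.single i (1:ℝ))
          rwa [hsing i, mul_one] at this
        exact pow_le_pow_left₀ (abs_nonneg _) h1 2
    calc ∫ y, ‖y‖ ^ 2 ∂μ
        = ∫ y, ∑ i, (inner ℝ y (EuclideanSpace.single i (1:ℝ)) : ℝ) ^ 2 ∂μ :=
          integral_congr_ae (ae_of_all _ hnorm)
      _ = ∑ i, ∫ y, (inner ℝ y (EuclideanSpace.single i (1:ℝ)) : ℝ) ^ 2 ∂μ :=
          integral_finset_sum _ (fun i _ => hint i)
      _ = ∑ _i : Fin n, (1 : ℝ) := by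
          refine Finset.sum_congr rfl fun i _ => ?_
          exact (hiso _ (hsing i)).2
      _ = (n : ℝ) := by simp
  have hae : ∀ᵐ θ ∂σ, ‖θ‖ = 1 := by
    rw [ae_iff]
    have hset : {θ : EuclideanSpace ℝ (Fin n) | ¬ ‖θ‖ = 1}
        = (Metric.sphere (0 : EuclideanSpace ℝ (Fin n)) 1)ᶜ := by
      ext θ; simp [mem_sphere_zero_iff_norm]
    rw [hset, measure_compl (Metric.isClosed_sphere.measurableSet) (measure_ne_top σ _), hσsph,
      measure_univ]
    simp
  have hkey := key_lintegral μ σ hrot hσrot h2 hmom hae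
  have main : ∀ ξ : EuclideanSpace ℝ (Fin n),
      logLaplace (σ.map fun y => (Real.sqrt n) • y) ξ ≤ logLaplace μ ξ := by
    intro ξ
    have hfmeas : Measurable fun y : EuclideanSpace ℝ (Fin n) => (Real.sqrt n) • y :=
      (continuous_const_smul _).measurable
    have hgcont : Continuous fun y : EuclideanSpace ℝ (Fin n) =>
        Real.exp ((inner ℝ y ξ : ℝ)) :=
      Real.continuous_exp.comp (continuous_id.inner continuous_const)
    have hσint : Integrable
        (fun θ : EuclideanSpace ℝ (Fin n) =>
          Real.exp ((inner ℝ ((Real.sqrt n) • θ) ξ : ℝ))) σ := by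
      refine Integrable.mono' (integrable_const (Real.exp (Real.sqrt n * ‖ξ‖))) ?_ ?_
      · exact (hgcont.comp (continuous_const_smul _)).aestronglyMeasurable
      · filter_upwards [hae] with θ hθ
        rw [Real.norm_eq_abs, abs_of_pos (Real.exp_pos _), Real.exp_le_exp,
          real_inner_smul_left]
        calc Real.sqrt n * (inner ℝ θ ξ : ℝ) ≤ Real.sqrt n * (‖θ‖ * ‖ξ‖) :=
              mul_le_mul_of_nonneg_left (real_inner_le_norm θ ξ) (Real.sqrt_nonneg n)
          _ = Real.sqrt n * ‖ξ‖ := by rw [hθ, one_mul]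
    have hτint : Integrable (fun y => Real.exp ((inner ℝ y ξ : ℝ)))
        (σ.map fun y => (Real.sqrt n) • y) := by
      rw [integrable_map_measure hgcont.aestronglyMeasurable hfmeas.aemeasurable]
      exact hσint
    have hτval : logLaplace (σ.map fun y => (Real.sqrt n) • y) ξ
        = ((Real.log (∫ y, Real.exp ((inner ℝ y ξ : ℝ))
            ∂(σ.map fun y => (Real.sqrt n) • y)) : ℝ) : EReal) := by
      simp only [logLaplace]
      rw [if_pos hτint]
    by_cases hμint : Integrable (fun y => Real.exp ((inner ℝ y ξ : ℝ))) μ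
    · have hμval : logLaplace μ ξ
          = ((Real.log (∫ y, Real.exp ((inner ℝ y ξ : ℝ)) ∂μ) : ℝ) : EReal) := by
        simp only [logLaplace]
        rw [if_pos hμint]
      rw [hτval, hμval, EReal.coe_le_coe_iff]
      have hi1 : ∫ y, Real.exp ((inner ℝ y ξ : ℝ)) ∂(σ.map fun y => (Real.sqrt n) • y)
          = ∫ θ, Real.exp ((inner ℝ ((Real.sqrt n) • θ) ξ : ℝ)) ∂σ :=
        integral_map hfmeas.aemeasurable hgcont.aestronglyMeasurable
      have hpos : 0 < ∫ θ, Real.exp ((inner ℝ ((Real.sqrt n) • θ) ξ : ℝ)) ∂σ :=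
        integral_exp_pos hσint
      have hle : ∫ θ, Real.exp ((inner ℝ ((Real.sqrt n) • θ) ξ : ℝ)) ∂σ
          ≤ ∫ y, Real.exp ((inner ℝ y ξ : ℝ)) ∂μ := by
        have hofσ : ENNReal.ofReal (∫ θ, Real.exp ((inner ℝ ((Real.sqrt n) • θ) ξ : ℝ)) ∂σ)
            = ∫⁻ θ, ENNReal.ofReal (Real.exp (Real.sqrt n * (inner ℝ θ ξ : ℝ))) ∂σ := by
          rw [ofReal_integral_eq_lintegral_ofReal hσint
            (ae_of_all _ fun θ => (Real.exp_pos _).le)]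
          refine lintegral_congr fun θ => ?_
          rw [real_inner_smul_left]
        have hofμ : ENNReal.ofReal (∫ y, Real.exp ((inner ℝ y ξ : ℝ)) ∂μ)
            = ∫⁻ y, ENNReal.ofReal (Real.exp ((inner ℝ y ξ : ℝ))) ∂μ :=
          ofReal_integral_eq_lintegral_ofReal hμint (ae_of_all _ fun y => (Real.exp_pos _).le)
        have hk := hkey ξ
        rw [← hofσ, ← hofμ] at hk
        exact (ENNReal.ofReal_le_ofReal_iff
          (integral_nonneg fun y => (Real.exp_pos _).le)).mp hk
      rw [hi1]
      exact Real.log_le_log hpos hle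
    · have : logLaplace μ ξ = ⊤ := by
        simp only [logLaplace]
        rw [if_neg hμint]
      rw [this]
      exact le_top
  refine ⟨main, fun x => ?_⟩
  rw [cramerE, cramerE]
  exact iSup_mono fun ξ => EReal.sub_le_sub le_rfl (main ξ)
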